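/- Let n ≥ 1, c ∈ ℤ≥0ⁿ, and let G be the supporting graph of the crossing model with base subgraphs G^k of sizes |V(G^k)| = k(n-k+1). In the crystal 𝒦(c) generated by the crossing model, the minimal function f₀ ≡ 0 is the unique source and the function f_c taking constant value c_k on each G^k is the unique sink, and every directed path from f₀ to f_c has length Σ_{k=1}^n c_k · k(n-k+1). -/

import Mathlib

/-- Nodes of the supporting graph of the crossing model: `(k, i, j)` with
`1 ≤ k ≤ n`, `1 ≤ j ≤ n - k + 1`, `j ≤ i ≤ j + k - 1` (node `v_i^k(j)`). -/
abbrev IsCNode (n k i j : ℤ) : Prop :=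
  1 ≤ k ∧ k ≤ n ∧ 1 ≤ j ∧ j ≤ n - k + 1 ∧ j ≤ i ∧ i ≤ j + k - 1

/-- Extension of a weight function to the extended supporting graph:
on extra nodes lying left of `G^k` the value is `c k`, on extra nodes lying
right of `G^k` the value is `d k`. -/
def extF (n : ℤ) (c d : ℤ → ℤ) (f : ℤ → ℤ → ℤ → ℤ) (k i j : ℤ) : ℤ :=
  if IsCNode n k i j then f k i j
  else if j ≤ 0 ∨ j + k ≤ i then c k else d k

/-- The switch condition at position `k` of the multinode `V_i(j)`:
the SE-edge of every preceding node is tight and the SW-edge of every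
succeeding node is tight. -/
def SwitchAt (n : ℤ) (f : ℤ → ℤ → ℤ → ℤ) (i j k : ℤ) : Prop :=
  (∀ k', i - j + 1 ≤ k' → k' < k → IsCNode n k' (i + 1) (j + 1) →
      f k' (i + 1) (j + 1) = f k' i j) ∧
  (∀ k', k < k' → k' ≤ n - j + 1 → IsCNode n k' (i + 1) j →
      f k' (i + 1) j = f k' i j)

/-- Feasible functions of the crossing model with upper bounds `c` and lower
bounds `d`: bounded, monotone along the edges, and satisfying the switch
condition in every multinode. -/
def Feasible (n : ℤ) (c d : ℤ → ℤ) (f : ℤ → ℤ → ℤ → ℤ) : Prop :=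
  (∀ k i j, IsCNode n k i j → d k ≤ f k i j ∧ f k i j ≤ c k) ∧
  (∀ k i j, IsCNode n k i j → IsCNode n k (i - 1) j → f k (i - 1) j ≤ f k i j) ∧
  (∀ k i j, IsCNode n k i j → IsCNode n k (i + 1) (j + 1) →
      f k (i + 1) (j + 1) ≤ f k i j) ∧
  (∀ i j, 1 ≤ j → j ≤ i → i ≤ n →
      ∃ k, i - j + 1 ≤ k ∧ k ≤ n - j + 1 ∧ SwitchAt n f i j k)

/-- Upper slack at a node: `∂f(e^NW(v))`. -/
def epsN (n : ℤ) (c d : ℤ → ℤ) (f : ℤ → ℤ → ℤ → ℤ) (k i j : ℤ) : ℤ :=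
  extF n c d f k (i - 1) (j - 1) - extF n c d f k i j

/-- Lower slack at a node: `∂f(e^SE(v))`. -/
def delN (n : ℤ) (c d : ℤ → ℤ) (f : ℤ → ℤ → ℤ → ℤ) (k i j : ℤ) : ℤ :=
  extF n c d f k i j - extF n c d f k (i + 1) (j + 1)

/-- Upper slack of the (extended) multinode `V_i(j)`. -/
noncomputable def epsM (n : ℤ) (c d : ℤ → ℤ) (f : ℤ → ℤ → ℤ → ℤ) (i j : ℤ) : ℤ :=
  ∑ k ∈ Finset.Icc (1 : ℤ) n, epsN n c d f k i j

/-- Lower slack of the (extended) multinode `V_i(j)`. -/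
noncomputable def delM (n : ℤ) (c d : ℤ → ℤ) (f : ℤ → ℤ → ℤ → ℤ) (i j : ℤ) : ℤ :=
  ∑ k ∈ Finset.Icc (1 : ℤ) n, delN n c d f k i j

/-- `π(p,q) = Σ_{r=p+1}^q ε_i(r) − Σ_{r=p}^{q-1} δ_i(r)`. -/
noncomputable def piM (n : ℤ) (c d : ℤ → ℤ) (f : ℤ → ℤ → ℤ → ℤ) (i p q : ℤ) : ℤ :=
  (∑ r ∈ Finset.Icc (p + 1) q, epsM n c d f i r) -
  (∑ r ∈ Finset.Icc p (q - 1), delM n c d f i r)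

namespace CM

abbrev z : ℤ → ℤ := fun _ => 0

variable {n : ℤ} {c : ℤ → ℤ} {f : ℤ → ℤ → ℤ → ℤ} {k i j : ℤ}

lemma extF_node (h : IsCNode n k i j) : extF n c z f k i j = f k i j := if_pos h

lemma extF_c (hk : 1 ≤ k) (h : j ≤ 0 ∨ j + k ≤ i) : extF n c z f k i j = c k := by
  have hnot : ¬ IsCNode n k i j := by
    rintro ⟨h1, h2, h3, h4, h5, h6⟩; omega
  rw [extF, if_neg hnot, if_pos h]

lemma extF_zero (hj : 1 ≤ j) (hik : i < j + k) (hnot : ¬ IsCNode n k i j) :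
    extF n c z f k i j = 0 := by
  rw [extF, if_neg hnot, if_neg (by omega)]

lemma extF_zero_right (hk : 1 ≤ k) (hj : 1 ≤ j) (hij : i < j) : extF n c z f k i j = 0 := by
  refine extF_zero hj (by omega) ?_
  rintro ⟨h1, h2, h3, h4, h5, h6⟩; omega

lemma extF_zero_col (hj : 1 ≤ j) (hcol : n - k + 1 < j) (hik : i < j + k) :
    extF n c z f k i j = 0 := by
  refine extF_zero hj hik ?_
  rintro ⟨h1, h2, h3, h4, h5, h6⟩; omega

section Feas
variable (hf : Feasible n c z f) (hc : ∀ k, 0 ≤ c k)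
include hf hc

lemma F_nonneg (hk1 : 1 ≤ k) : 0 ≤ extF n c z f k i j := by
  rw [extF]; split_ifs with h1 h2
  · exact (hf.1 k i j h1).1
  · exact hc k
  · exact le_refl _

lemma F_le_c : extF n c z f k i j ≤ c k := by
  rw [extF]; split_ifs with h1 h2
  · exact (hf.1 k i j h1).2
  · exact le_refl _
  · exact hc k

lemma F_diag (hk1 : 1 ≤ k) (hkn : k ≤ n) :
    extF n c z f k (i + 1) (j + 1) ≤ extF n c z f k i j := by
  by_cases h1 : IsCNode n k i j
  · by_cases h2 : IsCNode n k (i + 1) (j + 1)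
    · rw [extF_node h1, extF_node h2]; exact hf.2.2.1 k i j h1 h2
    · have h1' := h1
      obtain ⟨a1, a2, a3, a4, a5, a6⟩ := h1'
      rw [extF_zero (by omega) (by omega) h2, extF_node h1]
      exact (hf.1 k i j h1).1
  · by_cases h2 : IsCNode n k (i + 1) (j + 1)
    · have h2' := h2
      obtain ⟨a1, a2, a3, a4, a5, a6⟩ := h2'
      have hj0 : j ≤ 0 := by
        by_contra hj
        exact h1 ⟨hk1, hkn, by omega, by omega, by omega, by omega⟩
      rw [extF_c hk1 (Or.inl hj0), extF_node h2]
      exact (hf.1 _ _ _ h2).2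
    · by_cases h3 : (j + 1 ≤ 0 ∨ (j + 1) + k ≤ (i + 1))
      · rw [extF_c hk1 h3, extF_c hk1 (by omega : j ≤ 0 ∨ j + k ≤ i)]
      · rw [extF, if_neg h2, if_neg h3]
        exact F_nonneg hf hc hk1

lemma F_vert (hk1 : 1 ≤ k) (hkn : k ≤ n) :
    extF n c z f k i j ≤ extF n c z f k (i + 1) j := by
  by_cases h1 : IsCNode n k i j
  · by_cases h2 : IsCNode n k (i + 1) j
    · rw [extF_node h1, extF_node h2]
      have := hf.2.1 k (i + 1) j h2 (by simpa using h1)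
      simpa using this
    · have h1' := h1
      obtain ⟨a1, a2, a3, a4, a5, a6⟩ := h1'
      rw [extF_node h1, extF_c hk1 (by omega : j ≤ 0 ∨ j + k ≤ i + 1)]
      exact (hf.1 k i j h1).2
  · by_cases h2 : IsCNode n k (i + 1) j
    · have h2' := h2
      obtain ⟨a1, a2, a3, a4, a5, a6⟩ := h2'
      have hji : i < j := by
        by_contra hj
        exact h1 ⟨hk1, hkn, by omega, by omega, by omega, by omega⟩
      rw [extF_zero_right hk1 (by omega) hji, extF_node h2]
      exact (hf.1 _ _ _ h2).1
    · by_cases h3 : (j ≤ 0 ∨ j + k ≤ i)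
      · rw [extF_c hk1 h3, extF_c hk1 (by omega : j ≤ 0 ∨ j + k ≤ i + 1)]
      · rw [extF, if_neg h1, if_neg h3]
        exact F_nonneg hf hc hk1

end Feas
end CM

namespace CM

variable {n : ℤ} {c : ℤ → ℤ} {f : ℤ → ℤ → ℤ → ℤ} {k i j : ℤ}

lemma sum_Icc_split (g : ℤ → ℤ) (a b e : ℤ) (h1 : a ≤ b + 1) (h2 : b ≤ e) :
    (∑ x ∈ Finset.Icc a e, g x) =
      (∑ x ∈ Finset.Icc a b, g x) + ∑ x ∈ Finset.Icc (b + 1) e, g x := by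
  rw [← Finset.sum_union]
  · congr 1
    ext x
    simp only [Finset.mem_union, Finset.mem_Icc]
    omega
  · rw [Finset.disjoint_left]
    intro x hx hx'
    simp only [Finset.mem_Icc] at hx hx'
    omega

lemma epsN_eq_delN (r : ℤ) : epsN n c z f k i r = delN n c z f k (i - 1) (r - 1) := by
  have e1 : i - 1 + 1 = i := by ring
  have e2 : r - 1 + 1 = r := by ring
  rw [epsN, delN, e1, e2]

lemma epsM_eq (r : ℤ) : epsM n c z f i r = delM n c z f (i - 1) (r - 1) := by
  rw [epsM, delM]
  exact Finset.sum_congr rfl fun k _ => epsN_eq_delN r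

/-- `φ_i(j)`. -/
noncomputable def cphi (n : ℤ) (c : ℤ → ℤ) (f : ℤ → ℤ → ℤ → ℤ) (i j : ℤ) : ℤ := piM n c z f i 0 j

lemma phi_formula (i j : ℤ) :
    cphi n c f i j
      = ∑ s ∈ Finset.Icc (0 : ℤ) (j - 1), (delM n c z f (i - 1) s - delM n c z f i s) := by
  rw [cphi, piM, Finset.sum_sub_distrib]
  congr 1
  rw [show (0 : ℤ) + 1 = 1 by ring]
  rw [Finset.sum_congr rfl fun r _ => epsM_eq r]
  apply Finset.sum_nbij' (fun r => r - 1) (fun s => s + 1)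
  · intro a ha; simp only [Finset.mem_Icc] at *; omega
  · intro a ha; simp only [Finset.mem_Icc] at *; omega
  · intro a _; ring
  · intro a _; ring
  · intro a _; rfl

lemma phi_zero : cphi n c f i 0 = 0 := by
  rw [phi_formula]
  simp

lemma piM_eq (p q : ℤ) (hp : 0 ≤ p) (hpq : p ≤ q) :
    piM n c z f i p q = cphi n c f i q - cphi n c f i p := by
  rw [piM, cphi, cphi, piM, piM]
  rw [show (0:ℤ) + 1 = 1 by ring]
  rw [sum_Icc_split (fun r => epsM n c z f i r) 1 p q (by omega) hpq]
  rw [sum_Icc_split (fun r => delM n c z f i r) 0 (p - 1) (q - 1) (by omega) (by omega)]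
  rw [show p - 1 + 1 = p by ring]
  ring

lemma phi_succ (hj : 0 ≤ j) :
    cphi n c f i (j + 1) - cphi n c f i j = delM n c z f (i - 1) j - delM n c z f i j := by
  rw [phi_formula, phi_formula]
  rw [show j + 1 - 1 = j by ring]
  rw [sum_Icc_split _ 0 (j - 1) j (by omega) (by omega)]
  rw [show j - 1 + 1 = j by ring]
  simp

section Feas
variable (hf : Feasible n c z f) (hc : ∀ k, 0 ≤ c k)
include hf hc

lemma delN_nonneg (hk1 : 1 ≤ k) (hkn : k ≤ n) : 0 ≤ delN n c z f k i j := by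
  rw [delN]
  have := F_diag (i := i) (j := j) hf hc hk1 hkn
  omega

lemma delM_nonneg : 0 ≤ delM n c z f i j := by
  apply Finset.sum_nonneg
  intro k hk
  simp only [Finset.mem_Icc] at hk
  exact delN_nonneg hf hc hk.1 hk.2

omit hf hc in
lemma delM_zero_of_gt (hs : 1 ≤ j) (hij : i < j) : delM n c z f i j = 0 := by
  apply Finset.sum_eq_zero
  intro k hk
  simp only [Finset.mem_Icc] at hk
  rw [delN, extF_zero_right hk.1 hs hij, extF_zero_right hk.1 (by omega) (by omega)]
  ring

lemma phi_one_nonneg : 0 ≤ cphi n c f i 1 := by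
  rw [phi_formula]
  rw [show (1:ℤ) - 1 = 0 by ring]
  rw [Finset.Icc_self, Finset.sum_singleton]
  rw [delM, delM, ← Finset.sum_sub_distrib]
  apply Finset.sum_nonneg
  intro k hk
  simp only [Finset.mem_Icc] at hk
  rw [delN, delN]
  have e1 : extF n c z f k (i - 1) 0 = c k := extF_c hk.1 (Or.inl le_rfl)
  have e2 : extF n c z f k i 0 = c k := extF_c hk.1 (Or.inl le_rfl)
  have e3 : i - 1 + 1 = i := by ring
  have e4 : (0 : ℤ) + 1 = 1 := by ring
  rw [e3, e4, e1, e2]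
  have := F_vert (i := i) (j := 1) hf hc hk.1 hk.2
  omega

lemma phi_top (hi : 1 ≤ i) : cphi n c f i (i + 1) ≤ cphi n c f i i := by
  have h := phi_succ (n := n) (c := c) (f := f) (i := i) (j := i) (by omega)
  have h2 : delM n c z f (i - 1) i = 0 := delM_zero_of_gt (by omega) (by omega)
  have h3 := delM_nonneg (i := i) (j := i) hf hc
  omega

end Feas
end CM

noncomputable def tEps (n : ℤ) (c d : ℤ → ℤ) (f : ℤ → ℤ → ℤ → ℤ) (i j : ℤ) : ℤ :=
  max 0 ((Finset.Icc (0 : ℤ) (j - 1)).fold min (piM n c d f i 0 j)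
    (fun p => piM n c d f i p j))

noncomputable def tDel (n : ℤ) (c d : ℤ → ℤ) (f : ℤ → ℤ → ℤ → ℤ) (i j : ℤ) : ℤ :=
  max 0 ((Finset.Icc (j + 1) (i + 1)).fold min (-(piM n c d f i j (i + 1)))
    (fun q => -(piM n c d f i j q)))

def ActiveAt (n : ℤ) (c d : ℤ → ℤ) (f : ℤ → ℤ → ℤ → ℤ) (i j : ℤ) : Prop :=
  1 ≤ j ∧ j ≤ i ∧
  (∀ j', 0 ≤ j' → j' < j → tDel n c d f i j' = 0) ∧
  (∀ j', j < j' → j' ≤ i + 1 → tEps n c d f i j' = 0) ∧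
  0 < tEps n c d f i j ∧
  (∀ j₀, 1 ≤ j₀ → j₀ < j →
     ¬ ((∀ j', 0 ≤ j' → j' < j₀ → tDel n c d f i j' = 0) ∧
        (∀ j', j₀ < j' → j' ≤ i + 1 → tEps n c d f i j' = 0)))

def Move (n : ℤ) (c d : ℤ → ℤ) (i : ℤ) (f f' : ℤ → ℤ → ℤ → ℤ) : Prop :=
  Feasible n c d f ∧
  ∃ j k, ActiveAt n c d f i j ∧
    (i - j + 1 ≤ k ∧ k ≤ n - j + 1 ∧ SwitchAt n f i j k ∧
      ∀ k', i - j + 1 ≤ k' → k' < k → ¬ SwitchAt n f i j k') ∧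
    f' = fun k' i' j' => if k' = k ∧ i' = i ∧ j' = j then f k i j + 1 else f k' i' j'


namespace CM

variable {n : ℤ} {c : ℤ → ℤ} {f : ℤ → ℤ → ℤ → ℤ} {k i j : ℤ}

lemma tEps_pos_of (h : ∀ p ∈ Finset.Icc (0 : ℤ) (j - 1), 1 ≤ piM n c z f i p j)
    (hdef : 1 ≤ piM n c z f i 0 j) : 0 < tEps n c z f i j := by
  rw [tEps]
  have h1 : (1 : ℤ) ≤ (Finset.Icc (0 : ℤ) (j - 1)).fold min (piM n c z f i 0 j)
      (fun p => piM n c z f i p j) := (Finset.le_fold_min _).mpr ⟨hdef, h⟩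
  omega

lemma tEps_eq_zero_of (p : ℤ) (hp : p ∈ Finset.Icc (0 : ℤ) (j - 1))
    (h : piM n c z f i p j ≤ 0) : tEps n c z f i j = 0 := by
  rw [tEps]
  have h1 : (Finset.Icc (0 : ℤ) (j - 1)).fold min (piM n c z f i 0 j)
      (fun p => piM n c z f i p j) ≤ 0 := (Finset.fold_min_le _).mpr (Or.inr ⟨p, hp, h⟩)
  omega

lemma tDel_eq_zero_of (q : ℤ) (hq : q ∈ Finset.Icc (j + 1) (i + 1))
    (h : 0 ≤ piM n c z f i j q) : tDel n c z f i j = 0 := by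
  rw [tDel]
  have h1 : (Finset.Icc (j + 1) (i + 1)).fold min (-(piM n c z f i j (i + 1)))
      (fun q => -(piM n c z f i j q)) ≤ 0 :=
    (Finset.fold_min_le _).mpr (Or.inr ⟨q, hq, by omega⟩)
  omega

lemma exists_argmax_first (g : ℤ → ℤ) (a b : ℤ) (hab : a ≤ b) :
    ∃ m ∈ Finset.Icc a b, (∀ x ∈ Finset.Icc a b, g x ≤ g m) ∧
      (∀ x ∈ Finset.Icc a b, x < m → g x < g m) := by
  obtain ⟨b0, hb0, hmax⟩ :=
    Finset.exists_max_image (Finset.Icc a b) g (Finset.nonempty_Icc.mpr hab)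
  set T := (Finset.Icc a b).filter (fun x => g x = g b0) with hT
  have hTne : T.Nonempty := ⟨b0, Finset.mem_filter.mpr ⟨hb0, rfl⟩⟩
  refine ⟨T.min' hTne, Finset.mem_of_mem_filter _ (T.min'_mem hTne), ?_, ?_⟩
  · intro x hx
    have hm := (Finset.mem_filter.mp (T.min'_mem hTne)).2
    rw [hm]; exact hmax x hx
  · intro x hx hlt
    have hm := (Finset.mem_filter.mp (T.min'_mem hTne)).2
    rw [hm]
    rcases lt_or_eq_of_le (hmax x hx) with h | h
    · exact h
    · exfalso
      have : x ∈ T := Finset.mem_filter.mpr ⟨hx, h⟩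
      have := T.min'_le x this
      omega

lemma exists_argmax_last (g : ℤ → ℤ) (a b : ℤ) (hab : a ≤ b) :
    ∃ m ∈ Finset.Icc a b, (∀ x ∈ Finset.Icc a b, g x ≤ g m) ∧
      (∀ x ∈ Finset.Icc a b, m < x → g x < g m) := by
  obtain ⟨b0, hb0, hmax⟩ :=
    Finset.exists_max_image (Finset.Icc a b) g (Finset.nonempty_Icc.mpr hab)
  set T := (Finset.Icc a b).filter (fun x => g x = g b0) with hT
  have hTne : T.Nonempty := ⟨b0, Finset.mem_filter.mpr ⟨hb0, rfl⟩⟩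
  refine ⟨T.max' hTne, Finset.mem_of_mem_filter _ (T.max'_mem hTne), ?_, ?_⟩
  · intro x hx
    have hm := (Finset.mem_filter.mp (T.max'_mem hTne)).2
    rw [hm]; exact hmax x hx
  · intro x hx hlt
    have hm := (Finset.mem_filter.mp (T.max'_mem hTne)).2
    rw [hm]
    rcases lt_or_eq_of_le (hmax x hx) with h | h
    · exact h
    · exfalso
      have : x ∈ T := Finset.mem_filter.mpr ⟨hx, h⟩
      have := T.le_max' x this
      omega

lemma exists_min_switch {a b : ℤ} (ks : ℤ) (h1 : a ≤ ks) (h2 : ks ≤ b)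
    (h3 : SwitchAt n f i j ks) :
    ∃ km, a ≤ km ∧ km ≤ b ∧ SwitchAt n f i j km ∧
      ∀ k', a ≤ k' → k' < km → ¬ SwitchAt n f i j k' := by
  classical
  have hKne : ((Finset.Icc a ks).filter (fun k => SwitchAt n f i j k)).Nonempty :=
    ⟨ks, Finset.mem_filter.mpr ⟨Finset.mem_Icc.mpr ⟨h1, le_rfl⟩, h3⟩⟩
  obtain ⟨hmem, hsw⟩ := Finset.mem_filter.mp (Finset.min'_mem _ hKne)
  rw [Finset.mem_Icc] at hmem
  refine ⟨_, hmem.1, le_trans hmem.2 h2, hsw, ?_⟩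
  intro k' hk'1 hk'2 hsw'
  have h5 : Finset.min' _ hKne ≤ k' := Finset.min'_le _ k'
    (Finset.mem_filter.mpr ⟨Finset.mem_Icc.mpr ⟨hk'1, by omega⟩, hsw'⟩)
  omega

lemma exists_move_out (hf : Feasible n c z f) (hc : ∀ k, 0 ≤ c k)
    (hi1 : 1 ≤ i) (hin : i ≤ n) (hj1 : 1 ≤ j) (hji : j ≤ i)
    (hpos : 0 < cphi n c f i j) : ∃ f', Move n c z i f f' := by
  classical
  obtain ⟨js, hjs_mem, hmax, hstrict⟩ := exists_argmax_first (cphi n c f i) 0 i (by omega)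
  simp only [Finset.mem_Icc] at hjs_mem
  have hjs_pos : 0 < cphi n c f i js :=
    lt_of_lt_of_le hpos (hmax j (by simp only [Finset.mem_Icc]; omega))
  have hjs1 : 1 ≤ js := by
    by_contra h
    have : js = 0 := by omega
    rw [this, phi_zero] at hjs_pos
    omega
  have htE : 0 < tEps n c z f i js := by
    apply tEps_pos_of
    · intro p hp
      simp only [Finset.mem_Icc] at hp
      rw [piM_eq _ _ (by omega) (by omega)]
      have := hstrict p (by simp only [Finset.mem_Icc]; omega) (by omega)
      omega
    · rw [piM_eq _ _ (by omega) (by omega), phi_zero]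
      omega
  have hact : ActiveAt n c z f i js := by
    refine ⟨hjs1, hjs_mem.2, ?_, ?_, htE, ?_⟩
    · intro j' h0 hlt
      apply tDel_eq_zero_of js (by simp only [Finset.mem_Icc]; omega)
      rw [piM_eq _ _ h0 (by omega)]
      have := hmax j' (by simp only [Finset.mem_Icc]; omega)
      omega
    · intro j' hgt hle
      apply tEps_eq_zero_of js (by simp only [Finset.mem_Icc]; omega)
      rw [piM_eq _ _ (by omega) (by omega)]
      rcases eq_or_lt_of_le hle with h | h
      · subst h
        have h1 := phi_top hf hc hi1
        have h2 := hmax i (by simp only [Finset.mem_Icc]; omega)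
        omega
      · have := hmax j' (by simp only [Finset.mem_Icc]; omega)
        omega
    · intro j₀ h1 h2 hcontra
      have := hcontra.2 js h2 (by omega)
      omega
  obtain ⟨ks, hks1, hks2, hsw⟩ := hf.2.2.2 i js hjs1 hjs_mem.2 hin
  obtain ⟨km, hkm1, hkm2, hkmsw, hkmmin⟩ := exists_min_switch ks hks1 hks2 hsw
  exact ⟨fun k' i' j' => if k' = km ∧ i' = i ∧ j' = js
      then f km i js + 1 else f k' i' j',
    hf, js, km, hact, ⟨hkm1, hkm2, hkmsw, hkmmin⟩, rfl⟩

end CM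

namespace CM

/-- Aggregated vertical jump of column `r` between rows `a` and `a+1`. -/
noncomputable def VV (n : ℤ) (c : ℤ → ℤ) (f : ℤ → ℤ → ℤ → ℤ) (a r : ℤ) : ℤ :=
  ∑ k ∈ Finset.Icc (1 : ℤ) n, (extF n c z f k (a + 1) r - extF n c z f k a r)

noncomputable def DD (n : ℤ) (c : ℤ → ℤ) (f : ℤ → ℤ → ℤ → ℤ) (a j : ℤ) : ℤ :=
  ∑ r ∈ Finset.Icc (1 : ℤ) j, VV n c f a r

lemma VV_zero_col0 (a : ℤ) : VV n c f a 0 = 0 := by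
  apply Finset.sum_eq_zero
  intro k hk
  simp only [Finset.mem_Icc] at hk
  rw [extF_c hk.1 (Or.inl le_rfl), extF_c hk.1 (Or.inl le_rfl)]
  ring

lemma VV_nonneg (hf : Feasible n c z f) (hc : ∀ k, 0 ≤ c k) (a r : ℤ) :
    0 ≤ VV n c f a r := by
  apply Finset.sum_nonneg
  intro k hk
  simp only [Finset.mem_Icc] at hk
  have := F_vert (i := a) (j := r) hf hc hk.1 hk.2
  omega

lemma delM_diff (s : ℤ) :
    delM n c z f (i - 1) s - delM n c z f i s = VV n c f i (s + 1) - VV n c f (i - 1) s := by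
  rw [delM, delM, VV, VV, ← Finset.sum_sub_distrib, ← Finset.sum_sub_distrib]
  apply Finset.sum_congr rfl
  intro k _
  rw [delN, delN]
  have e : i - 1 + 1 = i := by ring
  rw [e]
  ring

lemma phi_eq_DD (hj : 1 ≤ j) :
    cphi n c f i j = DD n c f i j - DD n c f (i - 1) (j - 1) := by
  rw [phi_formula]
  rw [Finset.sum_congr rfl fun s _ => delM_diff s]
  rw [Finset.sum_sub_distrib]
  have h1 : ∑ s ∈ Finset.Icc (0 : ℤ) (j - 1), VV n c f i (s + 1) = DD n c f i j := by
    rw [DD]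
    apply Finset.sum_nbij' (fun s => s + 1) (fun r => r - 1)
    · intro a ha; simp only [Finset.mem_Icc] at *; omega
    · intro a ha; simp only [Finset.mem_Icc] at *; omega
    · intro a _; ring
    · intro a _; ring
    · intro a _; rfl
  have h2 : ∑ s ∈ Finset.Icc (0 : ℤ) (j - 1), VV n c f (i - 1) s = DD n c f (i - 1) (j - 1) := by
    rw [DD, sum_Icc_split (fun s => VV n c f (i - 1) s) 0 0 (j - 1) (by omega) (by omega)]
    rw [Finset.Icc_self, Finset.sum_singleton, VV_zero_col0]
    rw [show (0:ℤ) + 1 = 1 by ring]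
    ring
  rw [h1, h2]

lemma sink_DD (hf : Feasible n c z f) (hc : ∀ k, 0 ≤ c k)
    (H : ∀ i j, 1 ≤ i → i ≤ n → 1 ≤ j → j ≤ i → cphi n c f i j ≤ 0) :
    ∀ j, 1 ≤ j → ∀ i, j ≤ i → i ≤ n → DD n c f i j ≤ 0 := by
  intro j hj
  refine Int.le_induction (motive := fun j _ => ∀ i, j ≤ i → i ≤ n → DD n c f i j ≤ 0) ?_ ?_ j hj
  · intro i hji hin
    have h := H i 1 (by omega) hin (by omega) hji
    rw [phi_eq_DD (by omega)] at h
    have : DD n c f (i - 1) (1 - 1) = 0 := by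
      rw [DD]; rw [show (1:ℤ) - 1 = 0 by ring]; simp
    omega
  · intro j hj1 ih i hji hin
    have h := H i (j + 1) (by omega) hin (by omega) hji
    rw [phi_eq_DD (by omega)] at h
    have h2 := ih (i - 1) (by omega) (by omega)
    rw [show j + 1 - 1 = j by ring] at h
    omega

lemma sink_vals (hf : Feasible n c z f) (hc : ∀ k, 0 ≤ c k)
    (H : ∀ i j, 1 ≤ i → i ≤ n → 1 ≤ j → j ≤ i → cphi n c f i j ≤ 0)
    (hk1 : 1 ≤ k) (hkn : k ≤ n) (hr1 : 1 ≤ j) (hri : j ≤ i) (hin : i ≤ n) :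
    extF n c z f k (i + 1) j = extF n c z f k i j := by
  have hDD0 : (∑ r ∈ Finset.Icc (1 : ℤ) i, VV n c f i r) = 0 := by
    have ha := sink_DD hf hc H i (by omega) i le_rfl hin
    have hb : 0 ≤ DD n c f i i :=
      Finset.sum_nonneg fun r _ => VV_nonneg hf hc i r
    rw [DD] at ha hb
    omega
  have hVV : VV n c f i j = 0 :=
    (Finset.sum_eq_zero_iff_of_nonneg fun r _ => VV_nonneg hf hc i r).mp hDD0 j
      (by simp only [Finset.mem_Icc]; omega)
  rw [VV] at hVV
  have hnn : ∀ k' ∈ Finset.Icc (1:ℤ) n,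
      0 ≤ extF n c z f k' (i + 1) j - extF n c z f k' i j := by
    intro k' hk'
    simp only [Finset.mem_Icc] at hk'
    have := F_vert (i := i) (j := j) hf hc hk'.1 hk'.2
    omega
  have h3 := (Finset.sum_eq_zero_iff_of_nonneg hnn).mp hVV k
    (by simp only [Finset.mem_Icc]; omega)
  omega

lemma sink_climb (hf : Feasible n c z f) (hc : ∀ k, 0 ≤ c k)
    (H : ∀ i j, 1 ≤ i → i ≤ n → 1 ≤ j → j ≤ i → cphi n c f i j ≤ 0)
    (hnode : IsCNode n k i j) : f k i j = c k := by
  have hnode' := hnode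
  obtain ⟨h1, h2, h3, h4, h5, h6⟩ := hnode'
  have key : ∀ t : ℕ, i + t ≤ n + 1 → extF n c z f k (i + t) j = f k i j := by
    intro t
    induction t with
    | zero => intro _; simpa using extF_node hnode
    | succ t ih =>
      intro ht
      have e : (i + ((t : ℕ) + 1 : ℕ) : ℤ) = (i + t) + 1 := by push_cast; ring
      rw [e, sink_vals hf hc H h1 h2 h3 (by push_cast at ht ⊢; omega)
        (by push_cast at ht ⊢; omega)]
      exact ih (by push_cast at ht ⊢; omega)
  have hfin := key (n + 1 - i).toNat (by rw [Int.toNat_of_nonneg (by omega)]; omega)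
  rw [Int.toNat_of_nonneg (by omega)] at hfin
  rw [show i + (n + 1 - i) = n + 1 by ring] at hfin
  rw [extF_c h1 (Or.inr (by omega))] at hfin
  omega

/-! ### Source chain -/

lemma phi_tail (hj0 : 0 ≤ j) (hji : j ≤ i + 1) :
    cphi n c f i (i + 1) - cphi n c f i j
      = ∑ s ∈ Finset.Icc j i, (delM n c z f (i - 1) s - delM n c z f i s) := by
  rw [phi_formula, phi_formula]
  rw [show i + 1 - 1 = i by ring]
  rw [sum_Icc_split (fun s => delM n c z f (i - 1) s - delM n c z f i s) 0 (j - 1) i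
    (by omega) (by omega)]
  rw [show j - 1 + 1 = j by ring]
  ring

lemma SS_le (hf : Feasible n c z f) (hc : ∀ k, 0 ≤ c k)
    (hi1 : 1 ≤ i) (hj0 : 0 ≤ j) (hji : j ≤ i)
    (Hij : cphi n c f i j ≤ cphi n c f i (i + 1)) :
    (∑ s ∈ Finset.Icc j i, delM n c z f i s)
      ≤ ∑ s ∈ Finset.Icc j (i - 1), delM n c z f (i - 1) s := by
  have h1 : 0 ≤ ∑ s ∈ Finset.Icc j i, (delM n c z f (i - 1) s - delM n c z f i s) := by
    rw [← phi_tail hj0 (by omega)]; omega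
  rw [Finset.sum_sub_distrib] at h1
  have h2 : (∑ s ∈ Finset.Icc j i, delM n c z f (i - 1) s)
      = (∑ s ∈ Finset.Icc j (i - 1), delM n c z f (i - 1) s) + delM n c z f (i - 1) i := by
    rw [sum_Icc_split (fun s => delM n c z f (i - 1) s) j (i - 1) i (by omega) (by omega)]
    rw [show i - 1 + 1 = i by ring, Finset.Icc_self, Finset.sum_singleton]
  have h3 : delM n c z f (i - 1) i = 0 := delM_zero_of_gt (by omega) (by omega)
  omega

lemma source_SS (hf : Feasible n c z f) (hc : ∀ k, 0 ≤ c k)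
    (H : ∀ i j, 1 ≤ i → i ≤ n → 0 ≤ j → j ≤ i → cphi n c f i j ≤ cphi n c f i (i + 1)) :
    ∀ j, 1 ≤ j → ∀ i, j - 1 ≤ i → i ≤ n → (∑ s ∈ Finset.Icc j i, delM n c z f i s) ≤ 0 := by
  intro j hj i hi
  refine Int.le_induction
    (motive := fun i _ => i ≤ n → (∑ s ∈ Finset.Icc j i, delM n c z f i s) ≤ 0) ?_ ?_ i hi
  · intro _
    rw [show Finset.Icc j (j - 1) = ∅ by rw [Finset.Icc_eq_empty_iff]; omega]
    simp
  · intro i hi2 ih hin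
    have h1 := SS_le hf hc (i := i + 1) (j := j) (by omega) (by omega) (by omega)
      (H (i + 1) j (by omega) hin (by omega) (by omega))
    have h2 := ih (by omega)
    rw [show i + 1 - 1 = i by ring] at h1
    omega

lemma source_delN (hf : Feasible n c z f) (hc : ∀ k, 0 ≤ c k)
    (H : ∀ i j, 1 ≤ i → i ≤ n → 0 ≤ j → j ≤ i → cphi n c f i j ≤ cphi n c f i (i + 1))
    (hk1 : 1 ≤ k) (hkn : k ≤ n) (hs1 : 1 ≤ j) (hsi : j ≤ i) (hin : i ≤ n) :
    delN n c z f k i j = 0 := by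
  have h1 := source_SS hf hc H j hs1 i (by omega) hin
  have h2 : delM n c z f i j = 0 := by
    have hge : 0 ≤ delM n c z f i j := delM_nonneg hf hc
    have := (Finset.sum_eq_zero_iff_of_nonneg fun s hs => by
        exact delM_nonneg hf hc (i := i) (j := s)).mp (le_antisymm h1
          (Finset.sum_nonneg fun s _ => delM_nonneg hf hc)) j
        (by simp only [Finset.mem_Icc]; omega)
    exact this
  rw [delM] at h2
  have hnn : ∀ k' ∈ Finset.Icc (1:ℤ) n, 0 ≤ delN n c z f k' i j := by
    intro k' hk'
    simp only [Finset.mem_Icc] at hk'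
    exact delN_nonneg hf hc hk'.1 hk'.2
  exact (Finset.sum_eq_zero_iff_of_nonneg hnn).mp h2 k (by simp only [Finset.mem_Icc]; omega)

lemma source_climb (hf : Feasible n c z f) (hc : ∀ k, 0 ≤ c k)
    (H : ∀ i j, 1 ≤ i → i ≤ n → 0 ≤ j → j ≤ i → cphi n c f i j ≤ cphi n c f i (i + 1))
    (hnode : IsCNode n k i j) : f k i j = 0 := by
  have hnode' := hnode
  obtain ⟨h1, h2, h3, h4, h5, h6⟩ := hnode'
  have key : ∀ t : ℕ, j + t ≤ n - k + 2 → extF n c z f k (i + t) (j + t) = f k i j := by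
    intro t
    induction t with
    | zero => intro _; simpa using extF_node hnode
    | succ t ih =>
      intro ht
      have e1 : (i + ((t : ℕ) + 1 : ℕ) : ℤ) = (i + t) + 1 := by push_cast; ring
      have e2 : (j + ((t : ℕ) + 1 : ℕ) : ℤ) = (j + t) + 1 := by push_cast; ring
      have hd := source_delN hf hc H h1 h2 (j := j + t) (i := i + t)
        (by push_cast at ht ⊢; omega) (by push_cast at ht ⊢; omega)
        (by push_cast at ht ⊢; omega)
      rw [delN] at hd
      rw [e1, e2]
      rw [show extF n c z f k (i + t + 1) (j + t + 1) = extF n c z f k (i + t) (j + t) by omega]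
      exact ih (by push_cast at ht ⊢; omega)
  have hfin := key (n - k + 2 - j).toNat (by rw [Int.toNat_of_nonneg (by omega)]; omega)
  rw [Int.toNat_of_nonneg (by omega)] at hfin
  rw [extF_zero_col (by omega) (by omega) (by omega)] at hfin
  omega

end CM

namespace CM
variable {n : ℤ} {c : ℤ → ℤ} {f : ℤ → ℤ → ℤ → ℤ} {k i j : ℤ}

/-- Update a weight function at a single point. -/
def upd (f : ℤ → ℤ → ℤ → ℤ) (k0 i0 j0 v : ℤ) : ℤ → ℤ → ℤ → ℤ :=
  fun k' i' j' => if k' = k0 ∧ i' = i0 ∧ j' = j0 then v else f k' i' j'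

lemma upd_at {k0 i0 j0 v : ℤ} : upd f k0 i0 j0 v k0 i0 j0 = v := by
  rw [upd, if_pos ⟨rfl, rfl, rfl⟩]

lemma upd_ne {k0 i0 j0 v k' i' j' : ℤ} (h : ¬(k' = k0 ∧ i' = i0 ∧ j' = j0)) :
    upd f k0 i0 j0 v k' i' j' = f k' i' j' := if_neg h

lemma extF_upd {k0 i0 j0 v : ℤ} (hnode : IsCNode n k0 i0 j0) (k a b : ℤ) :
    extF n c z (upd f k0 i0 j0 v) k a b
      = if k = k0 ∧ a = i0 ∧ b = j0 then v else extF n c z f k a b := by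
  by_cases h : k = k0 ∧ a = i0 ∧ b = j0
  · obtain ⟨e1, e2, e3⟩ := h
    subst e1; subst e2; subst e3
    rw [if_pos ⟨rfl, rfl, rfl⟩, extF_node hnode, upd_at]
  · rw [if_neg h, extF, extF]
    by_cases hnd : IsCNode n k a b
    · rw [if_pos hnd, if_pos hnd, upd_ne h]
    · rw [if_neg hnd, if_neg hnd]

lemma sum_ite_kr {k0 j0 r : ℤ} (hm : k0 ∈ Finset.Icc (1:ℤ) n) :
    (∑ k ∈ Finset.Icc (1:ℤ) n, if k = k0 ∧ r = j0 then (1:ℤ) else 0)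
      = if r = j0 then 1 else 0 := by
  by_cases hr : r = j0
  · simp only [hr, and_true, if_true]
    rw [Finset.sum_ite_eq' (Finset.Icc (1:ℤ) n) k0 (fun _ => (1:ℤ))]
    simp [hm]
  · simp [hr]

lemma epsM_upd {k0 j0 : ℤ} (hnode : IsCNode n k0 i j0) (r : ℤ) :
    epsM n c z (upd f k0 i j0 (f k0 i j0 - 1)) i r
      = epsM n c z f i r + (if r = j0 then 1 else 0) := by
  have hm : k0 ∈ Finset.Icc (1:ℤ) n := by
    obtain ⟨a1, a2, -, -, -, -⟩ := hnode
    simp only [Finset.mem_Icc]; exact ⟨a1, a2⟩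
  rw [epsM, epsM]
  have key : ∀ k ∈ Finset.Icc (1:ℤ) n,
      epsN n c z (upd f k0 i j0 (f k0 i j0 - 1)) k i r
      = epsN n c z f k i r + (if k = k0 ∧ r = j0 then 1 else 0) := by
    intro k _
    rw [epsN, epsN, extF_upd hnode, extF_upd hnode]
    rw [if_neg (show ¬(k = k0 ∧ i - 1 = i ∧ r - 1 = j0) by rintro ⟨-, e2, -⟩; omega)]
    by_cases h : k = k0 ∧ r = j0
    · rw [if_pos ⟨h.1, rfl, h.2⟩, if_pos h]
      obtain ⟨e1, e2⟩ := h; subst e1; subst e2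
      rw [extF_node hnode]; ring
    · rw [if_neg (by rintro ⟨e1, -, e3⟩; exact h ⟨e1, e3⟩), if_neg h]; ring
  rw [Finset.sum_congr rfl key, Finset.sum_add_distrib, sum_ite_kr hm]

lemma delM_upd {k0 j0 : ℤ} (hnode : IsCNode n k0 i j0) (r : ℤ) :
    delM n c z (upd f k0 i j0 (f k0 i j0 - 1)) i r
      = delM n c z f i r - (if r = j0 then 1 else 0) := by
  have hm : k0 ∈ Finset.Icc (1:ℤ) n := by
    obtain ⟨a1, a2, -, -, -, -⟩ := hnode
    simp only [Finset.mem_Icc]; exact ⟨a1, a2⟩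
  rw [delM, delM]
  have key : ∀ k ∈ Finset.Icc (1:ℤ) n,
      delN n c z (upd f k0 i j0 (f k0 i j0 - 1)) k i r
      = delN n c z f k i r - (if k = k0 ∧ r = j0 then 1 else 0) := by
    intro k _
    rw [delN, delN, extF_upd hnode, extF_upd hnode]
    rw [if_neg (show ¬(k = k0 ∧ i + 1 = i ∧ r + 1 = j0) by rintro ⟨-, e2, -⟩; omega)]
    by_cases h : k = k0 ∧ r = j0
    · rw [if_pos ⟨h.1, rfl, h.2⟩, if_pos h]
      obtain ⟨e1, e2⟩ := h; subst e1; subst e2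
      rw [extF_node hnode]; ring
    · rw [if_neg (by rintro ⟨e1, -, e3⟩; exact h ⟨e1, e3⟩), if_neg h]; ring
  rw [Finset.sum_congr rfl key, Finset.sum_sub_distrib, sum_ite_kr hm]

lemma piM_upd {k0 j0 : ℤ} (hnode : IsCNode n k0 i j0) (p q : ℤ) (hp : 0 ≤ p) (hpq : p ≤ q) :
    piM n c z (upd f k0 i j0 (f k0 i j0 - 1)) i p q
      = cphi n c f i q - cphi n c f i p
        + (if p + 1 ≤ j0 ∧ j0 ≤ q then 1 else 0)
        + (if p ≤ j0 ∧ j0 ≤ q - 1 then 1 else 0) := by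
  rw [piM]
  rw [Finset.sum_congr rfl (fun r _ => epsM_upd hnode r),
      Finset.sum_congr rfl (fun r _ => delM_upd hnode r)]
  rw [Finset.sum_add_distrib, Finset.sum_sub_distrib]
  rw [Finset.sum_ite_eq' (Finset.Icc (p+1) q) j0 (fun _ => (1:ℤ)),
      Finset.sum_ite_eq' (Finset.Icc p (q-1)) j0 (fun _ => (1:ℤ))]
  have e : (∑ r ∈ Finset.Icc (p+1) q, epsM n c z f i r)
      - (∑ r ∈ Finset.Icc p (q-1), delM n c z f i r) = piM n c z f i p q := by rw [piM]
  simp only [Finset.mem_Icc]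
  rw [piM_eq p q hp hpq] at e
  omega


lemma exists_min_int (p : ℤ → Prop) {a k : ℤ} (h1 : a ≤ k) (hp : p k) :
    ∃ m, a ≤ m ∧ m ≤ k ∧ p m ∧ ∀ k', a ≤ k' → k' < m → ¬ p k' := by
  classical
  have hKne : ((Finset.Icc a k).filter (fun x => p x)).Nonempty :=
    ⟨k, Finset.mem_filter.mpr ⟨Finset.mem_Icc.mpr ⟨h1, le_rfl⟩, hp⟩⟩
  obtain ⟨hmem, hsw⟩ := Finset.mem_filter.mp (Finset.min'_mem _ hKne)
  rw [Finset.mem_Icc] at hmem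
  refine ⟨_, hmem.1, hmem.2, hsw, ?_⟩
  intro k' hk'1 hk'2 hp'
  have h5 : Finset.min' _ hKne ≤ k' := Finset.min'_le _ k'
    (Finset.mem_filter.mpr ⟨Finset.mem_Icc.mpr ⟨hk'1, by omega⟩, hp'⟩)
  omega

lemma exists_move_in (hf : Feasible n c z f) (hc : ∀ k, 0 ≤ c k)
    (hi1 : 1 ≤ i) (hin : i ≤ n) {j1 : ℤ} (hj10 : 0 ≤ j1) (hj1i : j1 ≤ i)
    (husable : cphi n c f i (i + 1) < cphi n c f i j1) :
    ∃ g, Move n c z i g f := by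
  classical
  obtain ⟨j0, hj0mem, hmax, hstrict⟩ := exists_argmax_last (cphi n c f i) 0 i (by omega)
  simp only [Finset.mem_Icc] at hj0mem
  obtain ⟨hj00, hj0i⟩ := hj0mem
  have hM3 : cphi n c f i (i + 1) ≤ cphi n c f i j0 - 1 := by
    have := hmax j1 (by simp only [Finset.mem_Icc]; omega)
    omega
  have hj01 : 1 ≤ j0 := by
    by_contra h
    have hj00' : j0 = 0 := by omega
    have h1 : 0 ≤ cphi n c f i 1 := phi_one_nonneg hf hc
    have h2 := hstrict 1 (by simp only [Finset.mem_Icc]; omega) (by omega)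
    rw [hj00', phi_zero] at h2
    omega
  have hup : ∀ q, j0 < q → q ≤ i + 1 → cphi n c f i q ≤ cphi n c f i j0 - 1 := by
    intro q hq1 hq2
    rcases eq_or_lt_of_le hq2 with h | h
    · subst h; exact hM3
    · have := hstrict q (by simp only [Finset.mem_Icc]; omega) hq1
      omega
  have hM5 : delM n c z f (i - 1) j0 + 1 ≤ delM n c z f i j0 := by
    have h1 := hup (j0 + 1) (by omega) (by omega)
    have h2 := phi_succ (n := n) (c := c) (f := f) (i := i) (j := j0) (by omega)
    omega
  have hdelpos : 1 ≤ delM n c z f i j0 := by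
    have := delM_nonneg (i := i - 1) (j := j0) hf hc
    omega
  -- choose k0 : the lowest node of the multinode with positive SE-slack
  have hexk : ∃ k, 1 ≤ k ∧ k ≤ n ∧ 1 ≤ delN n c z f k i j0 := by
    by_contra h
    push_neg at h
    have hle : delM n c z f i j0 ≤ 0 := by
      rw [delM]
      apply Finset.sum_nonpos
      intro k hk
      simp only [Finset.mem_Icc] at hk
      have := h k hk.1 hk.2
      omega
    omega
  obtain ⟨kk, hkk1, hkkn, hkkd⟩ := hexk
  obtain ⟨k0, hk01, hk0kk, hk0d, hk0min⟩ :=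
    exists_min_int (fun k => 1 ≤ delN n c z f k i j0) hkk1 hkkd
  have hk0n : k0 ≤ n := le_trans hk0kk hkkn
  have hK2 : ∀ k', 1 ≤ k' → k' < k0 → delN n c z f k' i j0 = 0 := by
    intro k' h1 h2
    have h3 := hk0min k' h1 h2
    have h4 := delN_nonneg (i := i) (j := j0) hf hc h1 (by omega)
    omega
  have hk0ge : i - j0 + 1 ≤ k0 := by
    by_contra h
    have hz : delN n c z f k0 i j0 = 0 := by
      rw [delN, extF_c hk01 (Or.inr (by omega)), extF_c hk01 (Or.inr (by omega))]
      ring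
    omega
  have hk0le : k0 ≤ n - j0 + 1 := by
    by_contra h
    have hz : delN n c z f k0 i j0 = 0 := by
      rw [delN, extF_zero_col (by omega) (by omega) (by omega),
        extF_zero_col (by omega) (by omega) (by omega)]
      ring
    omega
  have hnode0 : IsCNode n k0 i j0 := ⟨hk01, by omega, hj01, by omega, hj0i, by omega⟩
  -- f-switch at (i, j0)
  obtain ⟨ks, hks1, hks2, hsw⟩ := hf.2.2.2 i j0 hj01 hj0i hin
  have hksk0 : ks ≤ k0 := by
    by_contra h
    have hnode1 : IsCNode n k0 (i + 1) (j0 + 1) :=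
      ⟨hk01, by omega, by omega, by omega, by omega, by omega⟩
    have heq := hsw.1 k0 hk0ge (by omega) hnode1
    have hz : delN n c z f k0 i j0 = 0 := by
      rw [delN, extF_node hnode0, extF_node hnode1]
      omega
    omega
  have hsw0 : SwitchAt n f i j0 k0 := by
    constructor
    · intro k' h1 h2 hnode'
      have hnode'' : IsCNode n k' i j0 := by
        obtain ⟨a1, a2, a3, a4, a5, a6⟩ := hnode'
        exact ⟨a1, a2, hj01, by omega, hj0i, by omega⟩
      have hz := hK2 k' (by omega) h2
      rw [delN, extF_node hnode'', extF_node hnode'] at hz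
      omega
    · intro k' h1 h2 hnode'
      exact hsw.2 k' (by omega) h2 hnode'
  have hSW : ∀ k', k0 < k' → k' ≤ n →
      extF n c z f k' (i + 1) j0 = extF n c z f k' i j0 := by
    intro k' h1 h2
    by_cases hle : k' ≤ n - j0 + 1
    · have hn1 : IsCNode n k' (i + 1) j0 := ⟨by omega, h2, hj01, by omega, by omega, by omega⟩
      have hn2 : IsCNode n k' i j0 := ⟨by omega, h2, hj01, by omega, hj0i, by omega⟩
      rw [extF_node hn1, extF_node hn2]
      exact hsw.2 k' (by omega) hle hn1
    · rw [extF_zero_col hj01 (by omega) (by omega), extF_zero_col hj01 (by omega) (by omega)]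
  have hfpos : 1 ≤ f k0 i j0 := by
    have h0 := F_nonneg (i := i + 1) (j := j0 + 1) hf hc hk01
    rw [delN, extF_node hnode0] at hk0d
    omega
  -- P5 : strict vertical slack below the chosen node
  have hP5 : j0 + 1 ≤ i → f k0 (i - 1) j0 + 1 ≤ f k0 i j0 := by
    intro hj0i'
    have hnodeIm : IsCNode n k0 (i - 1) j0 := ⟨hk01, by omega, hj01, by omega, by omega, by omega⟩
    obtain ⟨kt, hkt1, hkt2, hswt⟩ := hf.2.2.2 (i - 1) j0 hj01 (by omega) (by omega)
    have e1 : i - 1 + 1 = i := by ring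
    have hT1 : ∀ k', 1 ≤ k' → k' < kt →
        extF n c z f k' (i - 1) j0 = extF n c z f k' i (j0 + 1) := by
      intro k' h1 h2
      by_cases hcase : k' ≤ i - 1 - j0
      · rw [extF_c h1 (Or.inr (by omega)), extF_c h1 (Or.inr (by omega))]
      · have hnA : IsCNode n k' i (j0 + 1) :=
          ⟨h1, by omega, by omega, by omega, by omega, by omega⟩
        have hnB : IsCNode n k' (i - 1) j0 :=
          ⟨h1, by omega, hj01, by omega, by omega, by omega⟩
        rw [extF_node hnA, extF_node hnB]
        have := hswt.1 k' (by omega) h2 (by rw [e1]; exact hnA)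
        rw [e1] at this
        omega
    have hT2 : ∀ k', kt < k' → k' ≤ n →
        extF n c z f k' i j0 = extF n c z f k' (i - 1) j0 := by
      intro k' h1 h2
      by_cases hcase : k' ≤ n - j0 + 1
      · have hnA : IsCNode n k' i j0 := ⟨by omega, h2, hj01, by omega, hj0i, by omega⟩
        have hnB : IsCNode n k' (i - 1) j0 := ⟨by omega, h2, hj01, by omega, by omega, by omega⟩
        rw [extF_node hnA, extF_node hnB]
        have := hswt.2 k' h1 (by omega) (by rw [e1]; exact hnA)
        rw [e1] at this
        omega
      · rw [extF_zero_col hj01 (by omega) (by omega), extF_zero_col hj01 (by omega) (by omega)]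
    have hAGG : (∑ k' ∈ Finset.Icc (1:ℤ) n, (extF n c z f k' i j0 - extF n c z f k' (i-1) j0))
        - (∑ k' ∈ Finset.Icc (1:ℤ) n, (extF n c z f k' (i+1) (j0+1) - extF n c z f k' i (j0+1)))
        = delM n c z f i j0 - delM n c z f (i - 1) j0 := by
      rw [delM, delM, ← Finset.sum_sub_distrib, ← Finset.sum_sub_distrib]
      apply Finset.sum_congr rfl
      intro k' _
      rw [delN, delN, e1]
      ring
    rcases lt_trichotomy kt k0 with hlt | heq | hgt
    · -- kt < k0 : contradiction with hM5
      exfalso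
      have hab : ∀ k' ∈ Finset.Icc (1:ℤ) n,
          (extF n c z f k' i j0 - extF n c z f k' (i-1) j0)
            ≤ (extF n c z f k' (i+1) (j0+1) - extF n c z f k' i (j0+1)) := by
        intro k' hk'
        simp only [Finset.mem_Icc] at hk'
        rcases lt_trichotomy k' kt with h | h | h
        · have e2 := hT1 k' hk'.1 h
          have e3 := hK2 k' hk'.1 (by omega)
          rw [delN] at e3
          omega
        · subst h
          have e2 := hK2 k' hk'.1 (by omega)
          rw [delN] at e2
          have e3 : 0 ≤ delN n c z f k' (i - 1) j0 := delN_nonneg hf hc hk'.1 hk'.2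
          rw [delN, e1] at e3
          omega
        · have e2 := hT2 k' h hk'.2
          have e3 := F_vert (i := i) (j := j0 + 1) hf hc hk'.1 hk'.2
          omega
      have hsum := Finset.sum_le_sum hab
      omega
    · -- kt = k0 : aggregate transfer
      subst heq
      have hab : ∀ k' ∈ Finset.Icc (1:ℤ) n, k' ≠ kt →
          (extF n c z f k' i j0 - extF n c z f k' (i-1) j0)
            ≤ (extF n c z f k' (i+1) (j0+1) - extF n c z f k' i (j0+1)) := by
        intro k' hk' hne
        simp only [Finset.mem_Icc] at hk'
        rcases lt_or_gt_of_ne hne with h | h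
        · have e2 := hT1 k' hk'.1 h
          have e3 := hK2 k' hk'.1 (by omega)
          rw [delN] at e3
          omega
        · have e2 := hT2 k' h hk'.2
          have e3 := F_vert (i := i) (j := j0 + 1) hf hc hk'.1 hk'.2
          omega
      have hmem : kt ∈ Finset.Icc (1:ℤ) n := by simp only [Finset.mem_Icc]; omega
      have hsplit1 : extF n c z f kt i j0 - extF n c z f kt (i-1) j0
            + ∑ k' ∈ (Finset.Icc (1:ℤ) n).erase kt,
              (extF n c z f k' i j0 - extF n c z f k' (i-1) j0)
          = ∑ k' ∈ Finset.Icc (1:ℤ) n, (extF n c z f k' i j0 - extF n c z f k' (i-1) j0) :=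
        Finset.add_sum_erase _ (fun k' => extF n c z f k' i j0 - extF n c z f k' (i-1) j0) hmem
      have hsplit2 : extF n c z f kt (i+1) (j0+1) - extF n c z f kt i (j0+1)
            + ∑ k' ∈ (Finset.Icc (1:ℤ) n).erase kt,
              (extF n c z f k' (i+1) (j0+1) - extF n c z f k' i (j0+1))
          = ∑ k' ∈ Finset.Icc (1:ℤ) n, (extF n c z f k' (i+1) (j0+1) - extF n c z f k' i (j0+1)) :=
        Finset.add_sum_erase _ (fun k' => extF n c z f k' (i+1) (j0+1) - extF n c z f k' i (j0+1)) hmem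
      have herase : ∀ k' ∈ (Finset.Icc (1:ℤ) n).erase kt,
          (extF n c z f k' i j0 - extF n c z f k' (i-1) j0)
            ≤ (extF n c z f k' (i+1) (j0+1) - extF n c z f k' i (j0+1)) := by
        intro k' hk'
        exact hab k' (Finset.mem_of_mem_erase hk') (Finset.ne_of_mem_erase hk')
      have hsum := Finset.sum_le_sum herase
      have hbnn : 0 ≤ extF n c z f kt (i+1) (j0+1) - extF n c z f kt i (j0+1) := by
        have := F_vert (i := i) (j := j0 + 1) hf hc hk01 hk0n
        omega
      have hgoal : extF n c z f kt i j0 - extF n c z f kt (i-1) j0 ≥ 1 := by omega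
      rw [extF_node hnode0, extF_node hnodeIm] at hgoal
      omega
    · -- k0 < kt : direct
      have e2 := hT1 k0 hk01 hgt
      rw [delN, extF_node hnode0] at hk0d
      have e3 : 0 ≤ extF n c z f k0 (i+1) (j0+1) - extF n c z f k0 i (j0+1) := by
        have := F_vert (i := i) (j := j0 + 1) hf hc hk01 hk0n
        omega
      rw [extF_node hnodeIm] at e2
      omega

  -- the decremented function
  set g := upd f k0 i j0 (f k0 i j0 - 1) with hgdef
  have hgne : ∀ k' i' j', ¬(k' = k0 ∧ i' = i ∧ j' = j0) → g k' i' j' = f k' i' j' :=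
    fun k' i' j' h => upd_ne h
  have hgat : g k0 i j0 = f k0 i j0 - 1 := upd_at
  have e1 : i - 1 + 1 = i := by ring
  have e2 : j0 - 1 + 1 = j0 := by ring
  -- P8 : switch for g at the multinode (i-1, j0)
  have hP8 : j0 + 1 ≤ i → ∃ kk', (i-1) - j0 + 1 ≤ kk' ∧ kk' ≤ n - j0 + 1 ∧
      SwitchAt n g (i-1) j0 kk' := by
    intro hj0i'
    obtain ⟨kt, hkt1, hkt2, hswt⟩ := hf.2.2.2 (i - 1) j0 hj01 (by omega) (by omega)
    have hktk0 : k0 ≤ kt := by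
      by_contra h
      have hnodeA : IsCNode n k0 (i - 1 + 1) j0 := by rw [e1]; exact hnode0
      have heq := hswt.2 k0 (by omega) (by omega) hnodeA
      rw [e1] at heq
      have := hP5 hj0i'
      omega
    refine ⟨kt, hkt1, hkt2, ?_, ?_⟩
    · intro k' c1 c2 hnode'
      rw [hgne k' (i-1+1) (j0+1) (by rintro ⟨-, -, e⟩; omega),
          hgne k' (i-1) j0 (by rintro ⟨-, e, -⟩; omega)]
      exact hswt.1 k' c1 c2 hnode'
    · intro k' c1 c2 hnode'
      rw [hgne k' (i-1+1) j0 (by rintro ⟨e, -, -⟩; omega),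
          hgne k' (i-1) j0 (by rintro ⟨-, e, -⟩; omega)]
      exact hswt.2 k' c1 c2 hnode'
  -- P7 : switch for g at the multinode (i-1, j0-1)
  have hP7 : 2 ≤ j0 → ∃ kk', (i-1) - (j0-1) + 1 ≤ kk' ∧ kk' ≤ n - (j0-1) + 1 ∧
      SwitchAt n g (i-1) (j0-1) kk' := by
    intro hj02
    obtain ⟨k2, hk21, hk22, hsw2⟩ := hf.2.2.2 (i - 1) (j0 - 1) (by omega) (by omega) (by omega)
    by_cases hck : k2 ≤ k0
    · refine ⟨k2, hk21, hk22, ?_, ?_⟩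
      · intro k' c1 c2 hnode'
        rw [hgne k' (i-1+1) (j0-1+1) (by rintro ⟨e, -, -⟩; omega),
            hgne k' (i-1) (j0-1) (by rintro ⟨-, e, -⟩; omega)]
        exact hsw2.1 k' c1 c2 hnode'
      · intro k' c1 c2 hnode'
        rw [hgne k' (i-1+1) (j0-1) (by rintro ⟨-, -, e⟩; omega),
            hgne k' (i-1) (j0-1) (by rintro ⟨-, e, -⟩; omega)]
        exact hsw2.2 k' c1 c2 hnode'
    · -- k0 < k2 : use k0, needs the vanishing of vertical slacks above k0 in column j0-1
      have hC1 : delM n c z f i (j0 - 1) ≤ delM n c z f (i - 1) (j0 - 1) := by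
        have h1 := hmax (j0 - 1) (by simp only [Finset.mem_Icc]; omega)
        have h2 := phi_succ (n := n) (c := c) (f := f) (i := i) (j := j0 - 1) (by omega)
        rw [e2] at h2
        omega
      have hAGG' : (∑ k' ∈ Finset.Icc (1:ℤ) n,
            (extF n c z f k' i (j0-1) - extF n c z f k' (i-1) (j0-1)))
          - (∑ k' ∈ Finset.Icc (1:ℤ) n, (extF n c z f k' (i+1) j0 - extF n c z f k' i j0))
          = delM n c z f i (j0 - 1) - delM n c z f (i - 1) (j0 - 1) := by
        rw [delM, delM, ← Finset.sum_sub_distrib, ← Finset.sum_sub_distrib]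
        apply Finset.sum_congr rfl
        intro k' _
        rw [delN, delN, e1, e2]
        ring
      have hD1 : ∀ k', 1 ≤ k' → k' < k2 →
          extF n c z f k' (i-1) (j0-1) = extF n c z f k' i j0 := by
        intro k' h1 h2
        by_cases hcase : k' ≤ i - j0
        · rw [extF_c h1 (Or.inr (by omega)), extF_c h1 (Or.inr (by omega))]
        · have hnA : IsCNode n k' i j0 := ⟨h1, by omega, hj01, by omega, hj0i, by omega⟩
          have hnB : IsCNode n k' (i-1) (j0-1) := ⟨h1, by omega, by omega, by omega, by omega, by omega⟩
          rw [extF_node hnA, extF_node hnB]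
          have := hsw2.1 k' (by omega) h2 (by rw [e1, e2]; exact hnA)
          rw [e1, e2] at this
          omega
      have hba : ∀ k' ∈ Finset.Icc (1:ℤ) k0,
          (extF n c z f k' (i+1) j0 - extF n c z f k' i j0)
            ≤ (extF n c z f k' i (j0-1) - extF n c z f k' (i-1) (j0-1)) := by
        intro k' hk'
        simp only [Finset.mem_Icc] at hk'
        have hD := hD1 k' hk'.1 (by omega)
        have hdel : 0 ≤ delN n c z f k' i (j0 - 1) :=
          delN_nonneg hf hc hk'.1 (by omega)
        rw [delN, e2] at hdel
        omega
      have hsplitA : (∑ k' ∈ Finset.Icc (1:ℤ) n,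
            (extF n c z f k' i (j0-1) - extF n c z f k' (i-1) (j0-1)))
          = (∑ k' ∈ Finset.Icc (1:ℤ) k0,
            (extF n c z f k' i (j0-1) - extF n c z f k' (i-1) (j0-1)))
          + ∑ k' ∈ Finset.Icc (k0+1) n,
            (extF n c z f k' i (j0-1) - extF n c z f k' (i-1) (j0-1)) :=
        sum_Icc_split _ 1 k0 n (by omega) (by omega)
      have hsplitB : (∑ k' ∈ Finset.Icc (1:ℤ) n,
            (extF n c z f k' (i+1) j0 - extF n c z f k' i j0))
          = (∑ k' ∈ Finset.Icc (1:ℤ) k0, (extF n c z f k' (i+1) j0 - extF n c z f k' i j0))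
          + ∑ k' ∈ Finset.Icc (k0+1) n, (extF n c z f k' (i+1) j0 - extF n c z f k' i j0) :=
        sum_Icc_split _ 1 k0 n (by omega) (by omega)
      have hBtail : (∑ k' ∈ Finset.Icc (k0+1) n,
          (extF n c z f k' (i+1) j0 - extF n c z f k' i j0)) = 0 := by
        apply Finset.sum_eq_zero
        intro k' hk'
        simp only [Finset.mem_Icc] at hk'
        have := hSW k' (by omega) hk'.2
        omega
      have hABle := Finset.sum_le_sum hba
      have hAtail_nonneg : ∀ k' ∈ Finset.Icc (k0+1) n,
          0 ≤ extF n c z f k' i (j0-1) - extF n c z f k' (i-1) (j0-1) := by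
        intro k' hk'
        simp only [Finset.mem_Icc] at hk'
        have := F_vert (i := i - 1) (j := j0 - 1) hf hc (by omega) hk'.2
        rw [e1] at this
        omega
      have hAtail : ∀ k' ∈ Finset.Icc (k0+1) n,
          extF n c z f k' i (j0-1) - extF n c z f k' (i-1) (j0-1) = 0 := by
        apply (Finset.sum_eq_zero_iff_of_nonneg hAtail_nonneg).mp
        have htot : (∑ k' ∈ Finset.Icc (k0+1) n,
            (extF n c z f k' i (j0-1) - extF n c z f k' (i-1) (j0-1))) ≤ 0 := by omega
        have hge : 0 ≤ (∑ k' ∈ Finset.Icc (k0+1) n,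
            (extF n c z f k' i (j0-1) - extF n c z f k' (i-1) (j0-1))) :=
          Finset.sum_nonneg hAtail_nonneg
        omega
      refine ⟨k0, by omega, by omega, ?_, ?_⟩
      · intro k' c1 c2 hnode'
        rw [hgne k' (i-1+1) (j0-1+1) (by rintro ⟨e, -, -⟩; omega),
            hgne k' (i-1) (j0-1) (by rintro ⟨-, e, -⟩; omega)]
        exact hsw2.1 k' c1 (by omega) hnode'
      · intro k' c1 c2 hnode'
        rw [hgne k' (i-1+1) (j0-1) (by rintro ⟨-, -, e⟩; omega),
            hgne k' (i-1) (j0-1) (by rintro ⟨-, e, -⟩; omega)]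
        have hnode'' := hnode'
        rw [e1] at hnode''
        obtain ⟨a1, a2, a3, a4, a5, a6⟩ := hnode''
        have hzero := hAtail k' (by simp only [Finset.mem_Icc]; omega)
        have hnA : IsCNode n k' i (j0-1) := ⟨a1, a2, a3, a4, by omega, a6⟩
        have hnB : IsCNode n k' (i-1) (j0-1) := ⟨a1, a2, a3, a4, by omega, by omega⟩
        rw [extF_node hnA, extF_node hnB] at hzero
        rw [e1]
        omega
  -- g is feasible
  have hgfeas : Feasible n c z g := by
    refine ⟨?_, ?_, ?_, ?_⟩
    · intro k' a b hnode'
      by_cases h : k' = k0 ∧ a = i ∧ b = j0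
      · obtain ⟨ea, eb, ec⟩ := h; subst ea; subst eb; subst ec
        rw [hgat]
        have := (hf.1 k' a b hnode').2
        constructor
        · show z k' ≤ _
          have : z k' = 0 := rfl
          omega
        · omega
      · rw [hgne k' a b h]
        exact hf.1 k' a b hnode'
    · intro k' a b hnode hnode'
      by_cases h1 : k' = k0 ∧ a = i ∧ b = j0
      · obtain ⟨ea, eb, ec⟩ := h1; subst ea; subst eb; subst ec
        rw [hgat, hgne k' (a-1) b (by rintro ⟨-, e, -⟩; omega)]
        have := hP5 (by obtain ⟨-, -, -, -, b1, -⟩ := hnode'; omega)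
        omega
      · by_cases h2 : k' = k0 ∧ a - 1 = i ∧ b = j0
        · obtain ⟨ea, eb, ec⟩ := h2; subst ea; subst ec
          have ha : a = i + 1 := by omega
          subst ha
          rw [hgne k' (i+1) b (by rintro ⟨-, e, -⟩; omega)]
          rw [show i + 1 - 1 = i from by ring, hgat]
          have := hf.2.1 k' (i+1) b hnode (by rw [show i + 1 - 1 = i from by ring] at hnode' ⊢; exact hnode')
          rw [show i + 1 - 1 = i from by ring] at this
          omega
        · rw [hgne k' a b h1, hgne k' (a-1) b h2]
          exact hf.2.1 k' a b hnode hnode'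
    · intro k' a b hnode hnode'
      by_cases h1 : k' = k0 ∧ a = i ∧ b = j0
      · obtain ⟨ea, eb, ec⟩ := h1; subst ea; subst eb; subst ec
        rw [hgat, hgne k' (a+1) (b+1) (by rintro ⟨-, e, -⟩; omega)]
        rw [delN, extF_node hnode0, extF_node hnode'] at hk0d
        omega
      · by_cases h2 : k' = k0 ∧ a + 1 = i ∧ b + 1 = j0
        · obtain ⟨ea, eb, ec⟩ := h2; subst ea
          have ha : a = i - 1 := by omega
          have hb : b = j0 - 1 := by omega
          subst ha; subst hb
          rw [hgne k' (i-1) (j0-1) (by rintro ⟨-, e, -⟩; omega)]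
          rw [e1, e2, hgat]
          have := hf.2.2.1 k' (i-1) (j0-1) hnode (by rw [e1, e2]; exact hnode0)
          rw [e1, e2] at this
          omega
        · rw [hgne k' a b h1, hgne k' (a+1) (b+1) h2]
          exact hf.2.2.1 k' a b hnode hnode'
    · intro a b hb1 hba hbn
      by_cases hab1 : a = i ∧ b = j0
      · obtain ⟨ea, eb⟩ := hab1; subst ea; subst eb
        refine ⟨k0, by omega, by omega, ?_, ?_⟩
        · intro k' c1 c2 hnode'
          rw [hgne k' (a+1) (b+1) (by rintro ⟨-, e, -⟩; omega),
              hgne k' a b (by rintro ⟨e, -, -⟩; omega)]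
          exact hsw0.1 k' c1 c2 hnode'
        · intro k' c1 c2 hnode'
          rw [hgne k' (a+1) b (by rintro ⟨-, e, -⟩; omega),
              hgne k' a b (by rintro ⟨e, -, -⟩; omega)]
          exact hsw0.2 k' c1 c2 hnode'
      · by_cases hab2 : a = i - 1 ∧ b = j0
        · obtain ⟨ea, eb⟩ := hab2; subst ea; subst eb
          exact hP8 (by omega)
        · by_cases hab3 : a = i - 1 ∧ b = j0 - 1
          · obtain ⟨ea, eb⟩ := hab3; subst ea; subst eb
            exact hP7 (by omega)
          · obtain ⟨kk', d1, d2, hswf⟩ := hf.2.2.2 a b hb1 hba hbn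
            refine ⟨kk', d1, d2, ?_, ?_⟩
            · intro k' c1 c2 hnode'
              rw [hgne k' (a+1) (b+1) (by rintro ⟨-, ea, eb⟩; exact hab3 ⟨by omega, by omega⟩),
                  hgne k' a b (by rintro ⟨-, ea, eb⟩; exact hab1 ⟨ea, eb⟩)]
              exact hswf.1 k' c1 c2 hnode'
            · intro k' c1 c2 hnode'
              rw [hgne k' (a+1) b (by rintro ⟨-, ea, eb⟩; exact hab2 ⟨by omega, eb⟩),
                  hgne k' a b (by rintro ⟨-, ea, eb⟩; exact hab1 ⟨ea, eb⟩)]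
              exact hswf.2 k' c1 c2 hnode'
  -- g is active at (i, j0)
  have hpig : ∀ p q, 0 ≤ p → p ≤ q → piM n c z g i p q
      = cphi n c f i q - cphi n c f i p
        + (if p + 1 ≤ j0 ∧ j0 ≤ q then 1 else 0)
        + (if p ≤ j0 ∧ j0 ≤ q - 1 then 1 else 0) :=
    fun p q hp hpq => piM_upd hnode0 p q hp hpq
  have h00 : 0 ≤ cphi n c f i j0 := by
    have := hmax 0 (by simp only [Finset.mem_Icc]; omega)
    rw [phi_zero] at this
    omega
  have htEg : 0 < tEps n c z g i j0 := by
    apply tEps_pos_of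
    · intro p hp
      simp only [Finset.mem_Icc] at hp
      rw [hpig p j0 (by omega) (by omega)]
      have := hmax p (by simp only [Finset.mem_Icc]; omega)
      rw [if_pos ⟨by omega, le_rfl⟩, if_neg (by rintro ⟨-, e⟩; omega)]
      omega
    · rw [hpig 0 j0 (by omega) (by omega), phi_zero]
      rw [if_pos ⟨by omega, le_rfl⟩, if_neg (by rintro ⟨-, e⟩; omega)]
      omega
  have hact : ActiveAt n c z g i j0 := by
    refine ⟨hj01, hj0i, ?_, ?_, htEg, ?_⟩
    · intro j' h0 hlt
      apply tDel_eq_zero_of j0 (by simp only [Finset.mem_Icc]; omega)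
      rw [hpig j' j0 h0 (by omega)]
      have := hmax j' (by simp only [Finset.mem_Icc]; omega)
      have hi1' : (0:ℤ) ≤ if j' + 1 ≤ j0 ∧ j0 ≤ j0 then (1:ℤ) else 0 := by positivity
      have hi2' : (0:ℤ) ≤ if j' ≤ j0 ∧ j0 ≤ j0 - 1 then (1:ℤ) else 0 := by positivity
      omega
    · intro j' hgt hle
      apply tEps_eq_zero_of j0 (by simp only [Finset.mem_Icc]; omega)
      rw [hpig j0 j' (by omega) (by omega)]
      rw [if_neg (by rintro ⟨e, -⟩; omega), if_pos ⟨le_rfl, by omega⟩]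
      have := hup j' hgt hle
      omega
    · intro j₁ h1 h2 hcontra
      have := hcontra.2 j0 h2 (by omega)
      omega
  -- assemble the move
  refine ⟨g, hgfeas, j0, k0, hact, ⟨by omega, by omega, ?_, ?_⟩, ?_⟩
  · constructor
    · intro k' c1 c2 hnode'
      rw [hgne k' (i+1) (j0+1) (by rintro ⟨-, e, -⟩; omega),
          hgne k' i j0 (by rintro ⟨e, -, -⟩; omega)]
      exact hsw0.1 k' c1 c2 hnode'
    · intro k' c1 c2 hnode'
      rw [hgne k' (i+1) j0 (by rintro ⟨-, e, -⟩; omega),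
          hgne k' i j0 (by rintro ⟨e, -, -⟩; omega)]
      exact hsw0.2 k' c1 c2 hnode'
  · intro k' c1 c2 hsw'
    have hnodeB : IsCNode n k0 (i+1) j0 := ⟨hk01, hk0n, hj01, by omega, by omega, by omega⟩
    have heq := hsw'.2 k0 c2 (by omega) hnodeB
    rw [hgne k0 (i+1) j0 (by rintro ⟨-, e, -⟩; omega), hgat] at heq
    have hmono := hf.2.1 k0 (i+1) j0 hnodeB (by rw [show i + 1 - 1 = i from by ring]; exact hnode0)
    rw [show i + 1 - 1 = i from by ring] at hmono
    omega
  · funext k' a b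
    by_cases h : k' = k0 ∧ a = i ∧ b = j0
    · obtain ⟨ea, eb, ec⟩ := h; subst ea; subst eb; subst ec
      rw [if_pos ⟨rfl, rfl, rfl⟩, hgat]
      ring
    · rw [if_neg h, hgne k' a b h]

/-! ### The maximal function -/

lemma delN_fc (hk : 1 ≤ k) (hkn : k ≤ n) {a s : ℤ} (hs0 : 0 ≤ s) (hsa : s ≤ a - 1)
    (han : a ≤ n) :
    delN n c z (fun k _ _ => c k) k (a - 1) s = delN n c z (fun k _ _ => c k) k a s := by
  simp only [delN, extF]
  split_ifs <;> simp only [IsCNode, not_and, not_or, not_le] at * <;> omega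

lemma phi_fc (hi1 : 1 ≤ i) (hin : i ≤ n) (hj : 0 ≤ j) (hji : j ≤ i) :
    cphi n c (fun k _ _ => c k) i j = 0 := by
  rw [phi_formula]
  apply Finset.sum_eq_zero
  intro s hs
  simp only [Finset.mem_Icc] at hs
  rw [delM, delM]
  rw [Finset.sum_congr rfl (fun k hk => by
    simp only [Finset.mem_Icc] at hk
    exact delN_fc hk.1 hk.2 hs.1 (by omega) hin)]
  ring

lemma no_move_from_top (hc : ∀ k, 0 ≤ c k) :
    ∀ i g, ¬ Move n c z i (fun k _ _ => c k) g := by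
  rintro i g ⟨hfeas, j, k, hact, ⟨hb1, hb2, -, -⟩, -⟩
  obtain ⟨hj1, hji, -, -, htE, -⟩ := hact
  have h0 : tEps n c z (fun k _ _ => c k) i j = 0 := by
    apply tEps_eq_zero_of 0 (by simp only [Finset.mem_Icc]; omega)
    have : piM n c z (fun k _ _ => c k) i 0 j = cphi n c (fun k _ _ => c k) i j := rfl
    rw [this, phi_fc (by omega) (by omega) (by omega) hji]
  omega

lemma no_move_to_zero :
    ∀ i g, ¬ Move n c z i g (fun _ _ _ => 0) := by
  rintro i g ⟨hfeas, j, k, hact, ⟨hb1, hb2, -, -⟩, heq⟩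
  obtain ⟨hj1, hji, -, -, -, -⟩ := hact
  have hnode : IsCNode n k i j := ⟨by omega, by omega, hj1, by omega, hji, by omega⟩
  have h := congrFun (congrFun (congrFun heq k) i) j
  simp only [if_pos (⟨rfl, rfl, rfl⟩ : k = k ∧ i = i ∧ j = j)] at h
  have h' : (0:ℤ) = g k i j + 1 := h
  have hb : (0:ℤ) ≤ g k i j := (hfeas.1 k i j hnode).1
  omega

lemma feasible_zero (hc : ∀ k, 0 ≤ c k) : Feasible n c z (fun _ _ _ => 0) := by
  refine ⟨?_, ?_, ?_, ?_⟩
  · intro k i j _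
    exact ⟨le_rfl, hc k⟩
  · intro _ _ _ _ _; exact le_rfl
  · intro _ _ _ _ _; exact le_rfl
  · intro i j hj hji hin
    exact ⟨i - j + 1, le_rfl, by omega, fun _ _ _ _ => rfl, fun _ _ _ _ => rfl⟩

lemma feasible_top (hc : ∀ k, 0 ≤ c k) : Feasible n c z (fun k _ _ => c k) := by
  refine ⟨?_, ?_, ?_, ?_⟩
  · intro k i j _
    exact ⟨hc k, le_rfl⟩
  · intro _ _ _ _ _; exact le_rfl
  · intro _ _ _ _ _; exact le_rfl
  · intro i j hj hji hin
    exact ⟨i - j + 1, le_rfl, by omega, fun _ _ _ _ => rfl, fun _ _ _ _ => rfl⟩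

/-! ### Counting -/

noncomputable def TSum (n : ℤ) (f : ℤ → ℤ → ℤ → ℤ) : ℤ :=
  ∑ k ∈ Finset.Icc (1:ℤ) n, ∑ j ∈ Finset.Icc (1:ℤ) (n - k + 1),
    ∑ i ∈ Finset.Icc j (j + k - 1), f k i j

lemma TSum_move {f f' : ℤ → ℤ → ℤ → ℤ} (hm : Move n c z i f f') :
    TSum n f' = TSum n f + 1 := by
  obtain ⟨hfeas, j, k, hact, ⟨hb1, hb2, -, -⟩, heq⟩ := hm
  obtain ⟨hj1, hji, -, -, -, -⟩ := hact
  have hnode : IsCNode n k i j := ⟨by omega, by omega, hj1, by omega, hji, by omega⟩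
  have hval : ∀ k' i' j', f' k' i' j'
      = f k' i' j' + (if k' = k ∧ i' = i ∧ j' = j then 1 else 0) := by
    intro k' i' j'
    have hv : f' k' i' j'
        = if k' = k ∧ i' = i ∧ j' = j then f k i j + 1 else f k' i' j' := by rw [heq]
    rw [hv]
    by_cases h : k' = k ∧ i' = i ∧ j' = j
    · obtain ⟨e1, e2, e3⟩ := h; subst e1; subst e2; subst e3
      rw [if_pos ⟨rfl, rfl, rfl⟩, if_pos ⟨rfl, rfl, rfl⟩]
    · rw [if_neg h, if_neg h]
      ring
  rw [TSum, TSum]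
  rw [Finset.sum_congr rfl (fun k' _ => Finset.sum_congr rfl (fun j' _ =>
    Finset.sum_congr rfl (fun i' _ => hval k' i' j')))]
  rw [Finset.sum_congr rfl (fun k' _ => Finset.sum_congr rfl (fun j' _ =>
    Finset.sum_add_distrib))]
  rw [Finset.sum_congr rfl (fun k' _ => Finset.sum_add_distrib)]
  rw [Finset.sum_add_distrib]
  congr 1
  have step1 : ∀ k' j', (∑ i' ∈ Finset.Icc j' (j' + k' - 1),
      if k' = k ∧ i' = i ∧ j' = j then (1:ℤ) else 0) = if k' = k ∧ j' = j then 1 else 0 := by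
    intro k' j'
    by_cases h : k' = k ∧ j' = j
    · obtain ⟨e1, e2⟩ := h; subst e1; subst e2
      rw [if_pos ⟨rfl, rfl⟩]
      rw [Finset.sum_congr rfl (fun i' _ => by
        by_cases hi' : i' = i
        · rw [if_pos ⟨rfl, hi', rfl⟩, if_pos hi']
        · rw [if_neg (by rintro ⟨-, e, -⟩; exact hi' e), if_neg hi'] :
          ∀ i' ∈ Finset.Icc j' (j' + k' - 1),
            (if k' = k' ∧ i' = i ∧ j' = j' then (1:ℤ) else 0) = if i' = i then 1 else 0)]
      rw [Finset.sum_ite_eq' (Finset.Icc j' (j' + k' - 1)) i (fun _ => (1:ℤ))]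
      rw [if_pos (Finset.mem_Icc.mpr ⟨hji, by omega⟩)]
    · rw [if_neg h]
      apply Finset.sum_eq_zero
      intro i' _
      rw [if_neg (by rintro ⟨e1, -, e3⟩; exact h ⟨e1, e3⟩)]
  rw [Finset.sum_congr rfl (fun k' _ => Finset.sum_congr rfl (fun j' _ => step1 k' j'))]
  have step2 : ∀ k', (∑ j' ∈ Finset.Icc (1:ℤ) (n - k' + 1),
      if k' = k ∧ j' = j then (1:ℤ) else 0) = if k' = k then 1 else 0 := by
    intro k'
    by_cases h : k' = k
    · subst h
      rw [if_pos rfl]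
      rw [Finset.sum_congr rfl (fun j' _ => by
        by_cases hj' : j' = j
        · rw [if_pos ⟨rfl, hj'⟩, if_pos hj']
        · rw [if_neg (by rintro ⟨-, e⟩; exact hj' e), if_neg hj'] :
          ∀ j' ∈ Finset.Icc (1:ℤ) (n - k' + 1),
            (if k' = k' ∧ j' = j then (1:ℤ) else 0) = if j' = j then 1 else 0)]
      rw [Finset.sum_ite_eq' (Finset.Icc (1:ℤ) (n - k' + 1)) j (fun _ => (1:ℤ))]
      obtain ⟨-, -, -, a4, -, -⟩ := hnode
      rw [if_pos (Finset.mem_Icc.mpr ⟨hj1, a4⟩)]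
    · rw [if_neg h]
      apply Finset.sum_eq_zero
      intro j' _
      rw [if_neg (by rintro ⟨e, -⟩; exact h e)]
  rw [Finset.sum_congr rfl (fun k' _ => step2 k')]
  rw [Finset.sum_ite_eq' (Finset.Icc (1:ℤ) n) k (fun _ => (1:ℤ))]
  rw [if_pos (Finset.mem_Icc.mpr ⟨by omega, by omega⟩)]

lemma path_length (hc : ∀ k, 0 ≤ c k) (m : ℕ) (p : ℕ → ℤ → ℤ → ℤ → ℤ)
    (h0 : ∀ k i j, IsCNode n k i j → p 0 k i j = 0)
    (hm : ∀ k i j, IsCNode n k i j → p m k i j = c k)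
    (hstep : ∀ t, t < m → ∃ i, Move n c z i (p t) (p (t + 1))) :
    (m : ℤ) = ∑ k ∈ Finset.Icc (1:ℤ) n, c k * (k * (n - k + 1)) := by
  have hts : ∀ t : ℕ, t ≤ m → TSum n (p t) = TSum n (p 0) + t := by
    intro t
    induction t with
    | zero => intro _; simp
    | succ t ih =>
      intro ht
      obtain ⟨i, hmv⟩ := hstep t (by omega)
      rw [TSum_move hmv, ih (by omega)]
      push_cast
      ring
  have h0' : TSum n (p 0) = 0 := by
    rw [TSum]
    apply Finset.sum_eq_zero
    intro k hk
    apply Finset.sum_eq_zero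
    intro j hj
    apply Finset.sum_eq_zero
    intro i hi
    simp only [Finset.mem_Icc] at hk hj hi
    exact h0 k i j ⟨hk.1, hk.2, hj.1, hj.2, hi.1, by omega⟩
  have hm' : TSum n (p m) = ∑ k ∈ Finset.Icc (1:ℤ) n, c k * (k * (n - k + 1)) := by
    rw [TSum]
    apply Finset.sum_congr rfl
    intro k hk
    simp only [Finset.mem_Icc] at hk
    rw [Finset.sum_congr rfl (fun j hj => Finset.sum_congr rfl (fun i hi => by
      simp only [Finset.mem_Icc] at hj hi
      exact hm k i j ⟨hk.1, hk.2, hj.1, hj.2, hi.1, by omega⟩))]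
    rw [Finset.sum_congr rfl (fun j _ => by
      rw [Finset.sum_const, Int.card_Icc, nsmul_eq_mul,
        Int.toNat_of_nonneg (by omega : (0:ℤ) ≤ j + k - 1 + 1 - j)] :
      ∀ j ∈ Finset.Icc (1:ℤ) (n - k + 1),
        (∑ _i ∈ Finset.Icc j (j + k - 1), c k) = (j + k - 1 + 1 - j) * c k)]
    rw [Finset.sum_congr rfl (fun j _ => by ring :
      ∀ j ∈ Finset.Icc (1:ℤ) (n - k + 1), (j + k - 1 + 1 - j) * c k = k * c k)]
    rw [Finset.sum_const, Int.card_Icc, nsmul_eq_mul,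
      Int.toNat_of_nonneg (by omega : (0:ℤ) ≤ n - k + 1 + 1 - 1)]
    ring
  have hfin := hts m le_rfl
  rw [hm', h0'] at hfin
  omega

end CM

/-- In the crystal 𝒦(c) generated by the crossing model, the all-zero function
is the unique source, the function with constant value `c k` on each base
subgraph `G^k` is the unique sink, and every directed path from the former to
the latter has length `Σ_{k=1}^n c_k · k(n-k+1)`. -/
theorem stmt7 (n : ℤ) (hn : 1 ≤ n) (c : ℤ → ℤ) (hc : ∀ k, 0 ≤ c k) :
    Feasible n c (fun _ => 0) (fun _ _ _ => 0) ∧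
    Feasible n c (fun _ => 0) (fun k _ _ => c k) ∧
    (∀ i g, ¬ Move n c (fun _ => 0) i g (fun _ _ _ => 0)) ∧
    (∀ f, Feasible n c (fun _ => 0) f → (∀ i g, ¬ Move n c (fun _ => 0) i g f) →
        ∀ k i j, IsCNode n k i j → f k i j = 0) ∧
    (∀ i g, ¬ Move n c (fun _ => 0) i (fun k _ _ => c k) g) ∧
    (∀ f, Feasible n c (fun _ => 0) f → (∀ i g, ¬ Move n c (fun _ => 0) i f g) →
        ∀ k i j, IsCNode n k i j → f k i j = c k) ∧
    (∀ (m : ℕ) (p : ℕ → ℤ → ℤ → ℤ → ℤ),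
        (∀ k i j, IsCNode n k i j → p 0 k i j = 0) →
        (∀ k i j, IsCNode n k i j → p m k i j = c k) →
        (∀ t, t < m → ∃ i, Move n c (fun _ => 0) i (p t) (p (t + 1))) →
        (m : ℤ) = ∑ k ∈ Finset.Icc (1 : ℤ) n, c k * (k * (n - k + 1))) := by
  refine ⟨CM.feasible_zero hc, CM.feasible_top hc, CM.no_move_to_zero,
    ?_, CM.no_move_from_top hc, ?_, ?_⟩
  · intro f hfeas hnomove k i j hnode
    refine CM.source_climb hfeas hc ?_ hnode
    intro i' j' hi'1 hi'n hj'0 hj'i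
    by_contra h
    push_neg at h
    obtain ⟨g, hmv⟩ := CM.exists_move_in hfeas hc hi'1 hi'n hj'0 hj'i h
    exact hnomove i' g hmv
  · intro f hfeas hnomove k i j hnode
    refine CM.sink_climb hfeas hc ?_ hnode
    intro i' j' hi'1 hi'n hj'1 hj'i
    by_contra h
    push_neg at h
    obtain ⟨f', hmv⟩ := CM.exists_move_out hfeas hc hi'1 hi'n hj'1 hj'i h
    exact hnomove i' f' hmv
  · intro m p h0 hm hstep
    exact CM.path_length hc m p h0 hm hstep
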